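/- Let (u,u1) be an l-pair with output f and (v,v1) an l⁺-pair with output g, and assume u, f, v, g all belong to L²(ℝ,ℂ^m). Then both limits [u,v](+∞) := lim_{t→+∞} [u,v](t) and [u,v](−∞) := lim_{t→−∞} [u,v](t) exist and are finite, where [u,v](t) := (u(t), v1(t)) − (u1(t), v(t)). -/

import Mathlib

open MeasureTheory Matrix Filter Topology
open scoped ENNReal NNReal

noncomputable section

abbrev Em (m : ℕ) := EuclideanSpace ℂ (Fin m)

/-- Matrix action on `ℂ^m`. -/
def mv (m : ℕ) (A : Matrix (Fin m) (Fin m) ℂ) (x : Em m) : Em m := WithLp.toLp 2 (A.mulVec x)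

/-- `(u,u1)` is an l-pair with output `f` for the Shin–Zettl data `(Q,s)`. -/
def IsLpair (m : ℕ) (Q s : ℝ → Matrix (Fin m) (Fin m) ℂ)
    (u u1 f : ℝ → Em m) : Prop :=
  LocallyIntegrable f volume ∧ Continuous u ∧ Continuous u1 ∧
  (∀ a x : ℝ, u x = u a + ∫ t in a..x, (mv m (Q t) (u t) + u1 t)) ∧
  (∀ a x : ℝ, u1 x = u1 a +
     ∫ t in a..x, (mv m (s t - Q t ^ 2) (u t) - mv m (Q t) (u1 t) - f t))

/-- `(v,v1)` is an l⁺-pair with output `g`: same with `Q,s` replaced by their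
conjugate transposes. -/
def IsLplusPair (m : ℕ) (Q s : ℝ → Matrix (Fin m) (Fin m) ℂ)
    (v v1 g : ℝ → Em m) : Prop :=
  IsLpair m (fun t => (Q t)ᴴ) (fun t => (s t)ᴴ) v v1 g

/-- `Q` is locally square-integrable (entrywise). -/
def LocL2 (m : ℕ) (Q : ℝ → Matrix (Fin m) (Fin m) ℂ) : Prop :=
  ∀ i j : Fin m, ∀ K : Set ℝ, IsCompact K →
    MemLp (fun x => Q x i j) 2 (volume.restrict K)

/-- `s` is locally integrable (entrywise). -/
def LocL1 (m : ℕ) (s : ℝ → Matrix (Fin m) (Fin m) ℂ) : Prop :=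
  ∀ i j : Fin m, LocallyIntegrable (fun x => s x i j) volume

/-- The `ℂ^m` inner product `(a,b) = ∑ i, aᵢ * conj bᵢ`. -/
def dotc (m : ℕ) (a b : Em m) : ℂ := ∑ i, a i * (starRingEnd ℂ) (b i)

/-- `⟨u,v⟩ = ∫ (u(x), v(x)) dx`. -/
def pairing (m : ℕ) (u v : ℝ → Em m) : ℂ := ∫ x : ℝ, dotc m (u x) (v x)

abbrev L2m (m : ℕ) := Lp (Em m) 2 (volume : Measure ℝ)

/-- The maximal graph `G`. -/
def Gmax (m : ℕ) (Q s : ℝ → Matrix (Fin m) (Fin m) ℂ) : Set (L2m m × L2m m) :=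
  {p | ∃ u u1 f : ℝ → Em m, IsLpair m Q s u u1 f ∧
        u =ᵐ[volume] p.1 ∧ f =ᵐ[volume] p.2}

/-- The preminimal graph `G₀₀`. -/
def G00 (m : ℕ) (Q s : ℝ → Matrix (Fin m) (Fin m) ℂ) : Set (L2m m × L2m m) :=
  {p | ∃ u u1 f : ℝ → Em m, IsLpair m Q s u u1 f ∧ HasCompactSupport u ∧
        u =ᵐ[volume] p.1 ∧ f =ᵐ[volume] p.2}

/-- The maximal graph `G⁺`. -/
def GmaxPlus (m : ℕ) (Q s : ℝ → Matrix (Fin m) (Fin m) ℂ) : Set (L2m m × L2m m) :=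
  {p | ∃ v v1 g : ℝ → Em m, IsLplusPair m Q s v v1 g ∧
        v =ᵐ[volume] p.1 ∧ g =ᵐ[volume] p.2}

/-- The preminimal graph `G₀₀⁺`. -/
def G00Plus (m : ℕ) (Q s : ℝ → Matrix (Fin m) (Fin m) ℂ) : Set (L2m m × L2m m) :=
  {p | ∃ v v1 g : ℝ → Em m, IsLplusPair m Q s v v1 g ∧ HasCompactSupport v ∧
        v =ᵐ[volume] p.1 ∧ g =ᵐ[volume] p.2}

lemma tri {a b : ℝ} {φ ψ : ℝ → ℂ}
    (hφ : IntegrableOn φ (Set.Ioc a b) volume) (hψ : IntegrableOn ψ (Set.Ioc a b) volume) :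
    (∫ s in Set.Ioc a b, φ s * ∫ t in Set.Ioc a s, ψ t) +
      (∫ t in Set.Ioc a b, (∫ s in Set.Ioc a t, φ s) * ψ t) =
    (∫ s in Set.Ioc a b, φ s) * ∫ t in Set.Ioc a b, ψ t := by
  set μ := volume.restrict (Set.Ioc a b) with hμ
  have hμφ : Integrable φ μ := hφ
  have hμψ : Integrable ψ μ := hψ
  have hk : Integrable (fun p : ℝ × ℝ => φ p.1 * ψ p.2) (μ.prod μ) := hμφ.mul_prod hμψ
  have hA : MeasurableSet {p : ℝ × ℝ | p.2 ≤ p.1} :=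
    measurableSet_le measurable_snd measurable_fst
  have h1 : (∫ p in {p : ℝ × ℝ | p.2 ≤ p.1}, φ p.1 * ψ p.2 ∂(μ.prod μ))
      = ∫ s in Set.Ioc a b, φ s * ∫ t in Set.Ioc a s, ψ t := by
    rw [← integral_indicator hA, integral_prod _ (hk.indicator hA)]
    refine setIntegral_congr_fun measurableSet_Ioc (fun s hs => ?_)
    have e1 : (fun t => ({p : ℝ × ℝ | p.2 ≤ p.1}).indicator
        (fun p : ℝ × ℝ => φ p.1 * ψ p.2) (s, t))
        = (Set.Iic s).indicator (fun t => φ s * ψ t) := by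
      funext t
      by_cases h : t ≤ s <;> simp [Set.indicator_apply, h]
    rw [e1, integral_indicator measurableSet_Iic, hμ,
      Measure.restrict_restrict measurableSet_Iic]
    have e2 : Set.Iic s ∩ Set.Ioc a b = Set.Ioc a s := by
      ext t
      simp only [Set.mem_inter_iff, Set.mem_Iic, Set.mem_Ioc]
      exact ⟨fun h => ⟨h.2.1, h.1⟩, fun h => ⟨h.2, h.1, h.2.trans hs.2⟩⟩
    rw [e2, MeasureTheory.integral_const_mul]
  have h2 : (∫ p in {p : ℝ × ℝ | p.2 ≤ p.1}ᶜ, φ p.1 * ψ p.2 ∂(μ.prod μ))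
      = ∫ t in Set.Ioc a b, (∫ s in Set.Ioc a t, φ s) * ψ t := by
    rw [← integral_indicator hA.compl, integral_prod_symm _ (hk.indicator hA.compl)]
    refine setIntegral_congr_fun measurableSet_Ioc (fun t ht => ?_)
    have e1 : (fun s => ({p : ℝ × ℝ | p.2 ≤ p.1}ᶜ).indicator
        (fun p : ℝ × ℝ => φ p.1 * ψ p.2) (s, t))
        = (Set.Iio t).indicator (fun s => φ s * ψ t) := by
      funext s
      by_cases h : s < t
      · simp [Set.indicator_apply, h, not_le.2 h]
      · simp [Set.indicator_apply, h, not_lt.1 h]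
    rw [e1, integral_indicator measurableSet_Iio, hμ,
      Measure.restrict_restrict measurableSet_Iio]
    have e2 : Set.Iio t ∩ Set.Ioc a b = Set.Ioo a t := by
      ext s
      simp only [Set.mem_inter_iff, Set.mem_Iio, Set.mem_Ioo, Set.mem_Ioc]
      exact ⟨fun h => ⟨h.2.1, h.1⟩, fun h => ⟨h.2, h.1, le_of_lt (h.2.trans_le ht.2)⟩⟩
    rw [e2, MeasureTheory.integral_mul_const, ← integral_Ioc_eq_integral_Ioo]
  calc (∫ s in Set.Ioc a b, φ s * ∫ t in Set.Ioc a s, ψ t) +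
      (∫ t in Set.Ioc a b, (∫ s in Set.Ioc a t, φ s) * ψ t)
      = (∫ p in {p : ℝ × ℝ | p.2 ≤ p.1}, φ p.1 * ψ p.2 ∂(μ.prod μ)) +
        (∫ p in {p : ℝ × ℝ | p.2 ≤ p.1}ᶜ, φ p.1 * ψ p.2 ∂(μ.prod μ)) := by rw [h1, h2]
    _ = ∫ p : ℝ × ℝ, φ p.1 * ψ p.2 ∂(μ.prod μ) := integral_add_compl hA hk
    _ = (∫ s in Set.Ioc a b, φ s) * ∫ t in Set.Ioc a b, ψ t := integral_prod_mul φ ψ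

lemma scalarPR {φ ψ F G : ℝ → ℂ}
    (hφ : ∀ a b : ℝ, IntervalIntegrable φ volume a b)
    (hψ : ∀ a b : ℝ, IntervalIntegrable ψ volume a b)
    (hF : ∀ a x : ℝ, F x = F a + ∫ t in a..x, φ t)
    (hG : ∀ a x : ℝ, G x = G a + ∫ t in a..x, ψ t)
    (a b : ℝ) (hab : a ≤ b) :
    F b * G b - F a * G a = ∫ t in a..b, (φ t * G t + F t * ψ t) := by
  have hΦc : Continuous fun x => ∫ t in a..x, φ t :=
    intervalIntegral.continuous_primitive hφ a
  have hΨc : Continuous fun x => ∫ t in a..x, ψ t :=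
    intervalIntegral.continuous_primitive hψ a
  have hFc : Continuous F := by
    have : F = fun x => F a + ∫ t in a..x, φ t := funext fun x => hF a x
    rw [this]; exact continuous_const.add hΦc
  have hGc : Continuous G := by
    have : G = fun x => G a + ∫ t in a..x, ψ t := funext fun x => hG a x
    rw [this]; exact continuous_const.add hΨc
  have hφab := hφ a b
  have hψab := hψ a b
  -- split the integral
  have i1 : IntervalIntegrable (fun t => φ t * G t) volume a b :=
    (hφab).mul_continuousOn hGc.continuousOn
  have i2 : IntervalIntegrable (fun t => F t * ψ t) volume a b :=
    (hψab).continuousOn_mul hFc.continuousOn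
  rw [intervalIntegral.integral_add i1 i2]
  -- rewrite the two integrals
  have e1 : (∫ t in a..b, φ t * G t)
      = G a * (∫ t in a..b, φ t) + ∫ t in a..b, φ t * ∫ s in a..t, ψ s := by
    have : (fun t => φ t * G t) = fun t => G a * φ t + φ t * ∫ s in a..t, ψ s := by
      funext t; rw [hG a t]; ring
    rw [this, intervalIntegral.integral_add ((hφab).const_mul _)
      ((hφab).mul_continuousOn hΨc.continuousOn), intervalIntegral.integral_const_mul]
  have e2 : (∫ t in a..b, F t * ψ t)
      = F a * (∫ t in a..b, ψ t) + ∫ t in a..b, (∫ s in a..t, φ s) * ψ t := by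
    have : (fun t => F t * ψ t) = fun t => F a * ψ t + (∫ s in a..t, φ s) * ψ t := by
      funext t; rw [hF a t]; ring
    rw [this, intervalIntegral.integral_add ((hψab).const_mul _)
      ((hψab).continuousOn_mul hΦc.continuousOn), intervalIntegral.integral_const_mul]
  -- convert to Ioc and apply tri
  have hIoc : ∀ x, a ≤ x → ∀ χ : ℝ → ℂ, (∫ t in a..x, χ t) = ∫ t in Set.Ioc a x, χ t :=
    fun x hx χ => intervalIntegral.integral_of_le hx
  have e3 : (∫ t in a..b, φ t * ∫ s in a..t, ψ s) + (∫ t in a..b, (∫ s in a..t, φ s) * ψ t)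
      = (∫ t in a..b, φ t) * ∫ t in a..b, ψ t := by
    rw [hIoc b hab (fun t => φ t * ∫ s in a..t, ψ s),
      hIoc b hab (fun t => (∫ s in a..t, φ s) * ψ t), hIoc b hab φ, hIoc b hab ψ,
      setIntegral_congr_fun measurableSet_Ioc
        (fun t ht => by simp only; rw [hIoc t (le_of_lt ht.1) ψ] :
          Set.EqOn (fun t => φ t * ∫ s in a..t, ψ s)
            (fun t => φ t * ∫ s in Set.Ioc a t, ψ s) (Set.Ioc a b)),
      setIntegral_congr_fun measurableSet_Ioc
        (fun t ht => by simp only; rw [hIoc t (le_of_lt ht.1) φ] :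
          Set.EqOn (fun t => (∫ s in a..t, φ s) * ψ t)
            (fun t => (∫ s in Set.Ioc a t, φ s) * ψ t) (Set.Ioc a b))]
    exact tri hφab.1 hψab.1
  rw [e1, e2, hF a b, hG a b]
  linear_combination -e3

lemma II.comp {m : ℕ} {Φ : ℝ → Em m} {a b : ℝ} (h : IntervalIntegrable Φ volume a b)
    (i : Fin m) : IntervalIntegrable (fun t => Φ t i) volume a b := by
  rw [intervalIntegrable_iff] at h ⊢
  exact (EuclideanSpace.proj (𝕜 := ℂ) i).integrable_comp h

lemma II.conj {q : ℝ → ℂ} {a b : ℝ} (h : IntervalIntegrable q volume a b) :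
    IntervalIntegrable (fun t => (starRingEnd ℂ) (q t)) volume a b := by
  rw [intervalIntegrable_iff] at h ⊢
  exact (Complex.conjCLE.toContinuousLinearMap).integrable_comp h

lemma intInt_comp {m : ℕ} {Φ : ℝ → Em m} {a b : ℝ} (h : IntervalIntegrable Φ volume a b)
    (i : Fin m) : (∫ t in a..b, Φ t) i = ∫ t in a..b, Φ t i :=
  ((EuclideanSpace.proj (𝕜 := ℂ) i).intervalIntegral_comp_comm h).symm

lemma intInt_conj {q : ℝ → ℂ} {a b : ℝ} :
    (starRingEnd ℂ) (∫ t in a..b, q t) = ∫ t in a..b, (starRingEnd ℂ) (q t) := by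
  simp only [intervalIntegral, map_sub, integral_conj]

lemma vecPR {m : ℕ} {φ ψ F G : ℝ → Em m}
    (hφ : ∀ a b : ℝ, IntervalIntegrable φ volume a b)
    (hψ : ∀ a b : ℝ, IntervalIntegrable ψ volume a b)
    (hF : ∀ a x : ℝ, F x = F a + ∫ t in a..x, φ t)
    (hG : ∀ a x : ℝ, G x = G a + ∫ t in a..x, ψ t)
    (a b : ℝ) (hab : a ≤ b) :
    dotc m (F b) (G b) - dotc m (F a) (G a)
      = ∫ t in a..b, (dotc m (φ t) (G t) + dotc m (F t) (ψ t)) := by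
  have hFc : Continuous F := by
    have : F = fun x => F a + ∫ t in a..x, φ t := funext fun x => hF a x
    rw [this]; exact continuous_const.add (intervalIntegral.continuous_primitive hφ a)
  have hGc : Continuous G := by
    have : G = fun x => G a + ∫ t in a..x, ψ t := funext fun x => hG a x
    rw [this]; exact continuous_const.add (intervalIntegral.continuous_primitive hψ a)
  have key : ∀ i : Fin m,
      F b i * (starRingEnd ℂ) (G b i) - F a i * (starRingEnd ℂ) (G a i)
        = ∫ t in a..b, (φ t i * (starRingEnd ℂ) (G t i)
            + F t i * (starRingEnd ℂ) (ψ t i)) := by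
    intro i
    refine scalarPR (F := fun t => F t i) (G := fun t => (starRingEnd ℂ) (G t i)) (fun a b => II.comp (hφ a b) i)
      (fun a b => II.conj (II.comp (hψ a b) i)) ?_ ?_ a b hab
    · intro c x
      have := congrArg (fun z : Em m => z i) (hF c x)
      simpa [intInt_comp (hφ c x) i] using this
    · intro c x
      have := congrArg (fun z : Em m => (starRingEnd ℂ) (z i)) (hG c x)
      simpa [intInt_comp (hψ c x) i, intInt_conj] using this
  have hint : ∀ i : Fin m, i ∈ Finset.univ → IntervalIntegrable
      (fun t => φ t i * (starRingEnd ℂ) (G t i) + F t i * (starRingEnd ℂ) (ψ t i))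
      volume a b := by
    intro i _
    exact ((II.comp (hφ a b) i).mul_continuousOn
        ((Complex.continuous_conj.comp ((continuous_apply i).comp ((PiLp.continuous_ofLp 2 _).comp hGc))).continuousOn)).add
      ((II.conj (II.comp (hψ a b) i)).continuousOn_mul
        (((continuous_apply i).comp ((PiLp.continuous_ofLp 2 _).comp hFc)).continuousOn))
  calc dotc m (F b) (G b) - dotc m (F a) (G a)
      = ∑ i : Fin m, (F b i * (starRingEnd ℂ) (G b i) - F a i * (starRingEnd ℂ) (G a i)) := by
        rw [dotc, dotc, Finset.sum_sub_distrib]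
    _ = ∑ i : Fin m, ∫ t in a..b, (φ t i * (starRingEnd ℂ) (G t i)
          + F t i * (starRingEnd ℂ) (ψ t i)) := by
        exact Finset.sum_congr rfl fun i _ => key i
    _ = ∫ t in a..b, ∑ i : Fin m, (φ t i * (starRingEnd ℂ) (G t i)
          + F t i * (starRingEnd ℂ) (ψ t i)) := (intervalIntegral.integral_finset_sum hint).symm
    _ = ∫ t in a..b, (dotc m (φ t) (G t) + dotc m (F t) (ψ t)) := by
        congr 1; funext t; rw [dotc, dotc, ← Finset.sum_add_distrib]

lemma memℒp_conj {α : Type*} [MeasurableSpace α] {μ : Measure α} {p : ℝ≥0∞} {q : α → ℂ}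
    (hq : MemLp q p μ) : MemLp (fun x => (starRingEnd ℂ) (q x)) p μ := by
  exact Complex.conjCLE.toContinuousLinearMap.comp_memLp' hq

lemma L2mul {α : Type*} [MeasurableSpace α] {μ : Measure α} {q r : α → ℂ}
    (hq : MemLp q 2 μ) (hr : MemLp r 2 μ) : Integrable (fun x => q x * r x) μ := by
  have h1 : MemLp (fun x => (starRingEnd ℂ) (q x)) 2 μ := memℒp_conj hq
  have h2 := L2.integrable_inner (𝕜 := ℂ) (h1.toLp _) (hr.toLp _)
  refine h2.congr ?_
  filter_upwards [h1.coeFn_toLp, hr.coeFn_toLp] with x e1 e2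
  simp [RCLike.inner_apply, e1, e2, mul_comm]

lemma L2mulconj {α : Type*} [MeasurableSpace α] {μ : Measure α} {q r : α → ℂ}
    (hq : MemLp q 2 μ) (hr : MemLp r 2 μ) :
    Integrable (fun x => q x * (starRingEnd ℂ) (r x)) μ := L2mul hq (memℒp_conj hr)

lemma emIntOn {m : ℕ} {F : ℝ → Em m} {S : Set ℝ}
    (h : ∀ i, IntegrableOn (fun t => F t i) S volume) : IntegrableOn F S volume := by
  have e : F = fun t => ∑ i : Fin m, (F t i) • (EuclideanSpace.single i (1 : ℂ) : Em m) := by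
    funext t
    apply PiLp.ext
    intro j
    symm
    rw [show (∑ i : Fin m, F t i • EuclideanSpace.single i 1 : Em m) j
      = (EuclideanSpace.proj (𝕜 := ℂ) j) (∑ i : Fin m, F t i • EuclideanSpace.single i 1)
      from rfl, map_sum]
    simp [EuclideanSpace.single_apply, mul_ite]
  rw [e]
  exact MeasureTheory.integrable_finset_sum _
    (fun i _ => (h i).smul_const (EuclideanSpace.single i (1 : ℂ)))

lemma mv_apply {m : ℕ} (A : Matrix (Fin m) (Fin m) ℂ) (x : Em m) (i : Fin m) :
    mv m A x i = ∑ j, A i j * x j := by rfl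

lemma integrandII {m : ℕ} {Q s : ℝ → Matrix (Fin m) (Fin m) ℂ}
    (hQ : LocL2 m Q) (hs : LocL1 m s) {u u1 f : ℝ → Em m}
    (hu : Continuous u) (hu1 : Continuous u1) (hf : LocallyIntegrable f volume) (a b : ℝ) :
    IntervalIntegrable (fun t => mv m (Q t) (u t) + u1 t) volume a b ∧
    IntervalIntegrable (fun t => mv m (s t - Q t ^ 2) (u t) - mv m (Q t) (u1 t) - f t)
      volume a b := by
  set K := Set.uIcc a b with hKdef
  have hK : IsCompact K := isCompact_uIcc
  have hQ1 : ∀ i j, IntegrableOn (fun t => Q t i j) K volume := by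
    intro i j
    haveI : IsFiniteMeasure (volume.restrict K) :=
      ⟨by rw [Measure.restrict_apply_univ]; exact hK.measure_lt_top⟩
    exact ((hQ i j K hK).mono_exponent (by norm_num)).integrable le_rfl
  have hmulc : ∀ (q : ℝ → ℂ), IntegrableOn q K volume → ∀ (c : ℝ → ℂ), Continuous c →
      IntegrableOn (fun t => q t * c t) K volume := by
    intro q hq c hc
    exact hq.mul_continuousOn hc.continuousOn hK
  have hQu : ∀ (w : ℝ → Em m), Continuous w →
      IntegrableOn (fun t => mv m (Q t) (w t)) K volume := by
    intro w hw
    apply emIntOn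
    intro i
    simp only [mv_apply]
    exact MeasureTheory.integrable_finset_sum _ (fun j _ =>
      hmulc _ (hQ1 i j) _ ((continuous_apply j).comp ((PiLp.continuous_ofLp 2 _).comp hw)))
  have hsu : IntegrableOn (fun t => mv m (s t) (u t)) K volume := by
    apply emIntOn
    intro i
    simp only [mv_apply]
    exact MeasureTheory.integrable_finset_sum _ (fun j _ =>
      hmulc _ ((hs i j).integrableOn_isCompact hK) _ ((continuous_apply j).comp ((PiLp.continuous_ofLp 2 _).comp hu)))
  have hQ2u : IntegrableOn (fun t => mv m (Q t ^ 2) (u t)) K volume := by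
    apply emIntOn
    intro i
    have e : (fun t => mv m (Q t ^ 2) (u t) i)
        = fun t => ∑ j, ∑ k, Q t i k * Q t k j * u t j := by
      funext t
      rw [mv_apply]
      refine Finset.sum_congr rfl fun j _ => ?_
      rw [pow_two, Matrix.mul_apply, Finset.sum_mul]
    rw [e]
    refine MeasureTheory.integrable_finset_sum _ (fun j _ =>
      MeasureTheory.integrable_finset_sum _ (fun k _ => ?_))
    exact hmulc _ (L2mul (hQ i k K hK) (hQ k j K hK)) _ ((continuous_apply j).comp ((PiLp.continuous_ofLp 2 _).comp hu))
  constructor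
  · rw [intervalIntegrable_iff]
    refine IntegrableOn.mono_set ?_ (Set.uIoc_subset_uIcc (a := a) (b := b))
    exact (hQu u hu).add (hu1.continuousOn.integrableOn_compact hK)
  · rw [intervalIntegrable_iff]
    have e : (fun t => mv m (s t - Q t ^ 2) (u t) - mv m (Q t) (u1 t) - f t)
        = fun t => (mv m (s t) (u t) - mv m (Q t ^ 2) (u t)) - mv m (Q t) (u1 t) - f t := by
      funext t
      simp [mv, Matrix.sub_mulVec]
    rw [e]
    refine IntegrableOn.mono_set ?_ (Set.uIoc_subset_uIcc (a := a) (b := b))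
    exact ((hsu.sub hQ2u).sub (hQu u1 hu1)).sub (hf.integrableOn_isCompact hK)

lemma locL2_ct {m : ℕ} {Q : ℝ → Matrix (Fin m) (Fin m) ℂ} (hQ : LocL2 m Q) :
    LocL2 m (fun t => (Q t)ᴴ) := by
  intro i j K hK
  simpa [Matrix.conjTranspose_apply] using memℒp_conj (hQ j i K hK)

lemma locL1_ct {m : ℕ} {s : ℝ → Matrix (Fin m) (Fin m) ℂ} (hs : LocL1 m s) :
    LocL1 m (fun t => (s t)ᴴ) := by
  intro i j
  rw [MeasureTheory.locallyIntegrable_iff]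
  intro K hK
  have := ((hs j i).integrableOn_isCompact hK)
  have h2 : IntegrableOn (fun x => (starRingEnd ℂ) (s x j i)) K volume :=
    Complex.conjCLE.toContinuousLinearMap.integrable_comp this
  simpa [Matrix.conjTranspose_apply] using h2

lemma dotc_add_left {m : ℕ} (x y z : Em m) : dotc m (x + y) z = dotc m x z + dotc m y z := by
  simp [dotc, add_mul, Finset.sum_add_distrib]

lemma dotc_sub_left {m : ℕ} (x y z : Em m) : dotc m (x - y) z = dotc m x z - dotc m y z := by
  simp [dotc, sub_mul, Finset.sum_sub_distrib]

lemma dotc_add_right {m : ℕ} (x y z : Em m) : dotc m x (y + z) = dotc m x y + dotc m x z := by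
  simp [dotc, mul_add, Finset.sum_add_distrib]

lemma dotc_sub_right {m : ℕ} (x y z : Em m) : dotc m x (y - z) = dotc m x y - dotc m x z := by
  simp [dotc, mul_sub, Finset.sum_sub_distrib]

lemma mv_sub {m : ℕ} (A B : Matrix (Fin m) (Fin m) ℂ) (x : Em m) :
    mv m (A - B) x = mv m A x - mv m B x := by
  simp [mv, Matrix.sub_mulVec]

lemma dotc_mv {m : ℕ} (A : Matrix (Fin m) (Fin m) ℂ) (x y : Em m) :
    dotc m (mv m A x) y = dotc m x (mv m Aᴴ y) := by
  simp only [dotc, mv_apply, Matrix.conjTranspose_apply, map_sum,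
    Finset.sum_mul, Finset.mul_sum]
  rw [Finset.sum_comm]
  refine Finset.sum_congr rfl fun i _ => Finset.sum_congr rfl fun j _ => ?_
  rw [_root_.map_mul]
  simp only [starRingEnd_apply, star_star]
  ring

lemma pointwise_bracket {m : ℕ} (A S : Matrix (Fin m) (Fin m) ℂ) (ut u1t vt v1t ft gt : Em m) :
    (dotc m (mv m A ut + u1t) v1t
      + dotc m ut (mv m (Sᴴ - Aᴴ ^ 2) vt - mv m Aᴴ v1t - gt))
    - (dotc m (mv m (S - A ^ 2) ut - mv m A u1t - ft) vt
      + dotc m u1t (mv m Aᴴ vt + v1t))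
    = dotc m ft vt - dotc m ut gt := by
  have hA2 : (Aᴴ) ^ 2 = (A ^ 2)ᴴ := by
    rw [pow_two, pow_two, Matrix.conjTranspose_mul]
  rw [hA2]
  simp only [mv_sub, dotc_add_left, dotc_sub_left, dotc_add_right, dotc_sub_right]
  rw [← dotc_mv S ut vt, ← dotc_mv (A ^ 2) ut vt, ← dotc_mv A ut v1t, ← dotc_mv A u1t vt]
  ring

lemma II.dotc_left {m : ℕ} {Φ w : ℝ → Em m} {a b : ℝ}
    (hΦ : IntervalIntegrable Φ volume a b) (hw : Continuous w) :
    IntervalIntegrable (fun t => dotc m (Φ t) (w t)) volume a b := by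
  have : (fun t => dotc m (Φ t) (w t))
      = fun t => ∑ i, Φ t i * (starRingEnd ℂ) (w t i) := rfl
  rw [this]
  rw [intervalIntegrable_iff]
  refine MeasureTheory.integrable_finset_sum _ (fun i _ => ?_)
  exact intervalIntegrable_iff.1 ((II.comp hΦ i).mul_continuousOn
    ((Complex.continuous_conj.comp ((continuous_apply i).comp ((PiLp.continuous_ofLp 2 _).comp hw))).continuousOn))

lemma II.dotc_right {m : ℕ} {w Ψ : ℝ → Em m} {a b : ℝ}
    (hw : Continuous w) (hΨ : IntervalIntegrable Ψ volume a b) :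
    IntervalIntegrable (fun t => dotc m (w t) (Ψ t)) volume a b := by
  have : (fun t => dotc m (w t) (Ψ t))
      = fun t => ∑ i, w t i * (starRingEnd ℂ) (Ψ t i) := rfl
  rw [this]
  rw [intervalIntegrable_iff]
  refine MeasureTheory.integrable_finset_sum _ (fun i _ => ?_)
  exact intervalIntegrable_iff.1 ((II.conj (II.comp hΨ i)).continuousOn_mul
    (((continuous_apply i).comp ((PiLp.continuous_ofLp 2 _).comp hw)).continuousOn))

lemma intL2dotc {m : ℕ} {F G : ℝ → Em m} (hF : MemLp F 2 (volume : Measure ℝ))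
    (hG : MemLp G 2 (volume : Measure ℝ)) :
    Integrable (fun t => dotc m (F t) (G t)) volume := by
  have : (fun t => dotc m (F t) (G t))
      = fun t => ∑ i, F t i * (starRingEnd ℂ) (G t i) := rfl
  rw [this]
  refine MeasureTheory.integrable_finset_sum _ (fun i _ => ?_)
  have hFi : MemLp (fun t => F t i) 2 (volume : Measure ℝ) :=
    (EuclideanSpace.proj (𝕜 := ℂ) i).comp_memLp' hF
  have hGi : MemLp (fun t => G t i) 2 (volume : Measure ℝ) :=
    (EuclideanSpace.proj (𝕜 := ℂ) i).comp_memLp' hG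
  exact L2mulconj hFi hGi

/-- Existence of the limits of the bracket `[u,v](t)` at `±∞`. -/
theorem stmt5 (m : ℕ) (hm : 1 ≤ m) (Q s : ℝ → Matrix (Fin m) (Fin m) ℂ)
    (hQ : LocL2 m Q) (hs : LocL1 m s)
    (u u1 f v v1 g : ℝ → Em m)
    (hu : IsLpair m Q s u u1 f) (hv : IsLplusPair m Q s v v1 g)
    (huL2 : MemLp u 2 (volume : Measure ℝ)) (hfL2 : MemLp f 2 (volume : Measure ℝ))
    (hvL2 : MemLp v 2 (volume : Measure ℝ)) (hgL2 : MemLp g 2 (volume : Measure ℝ)) :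
    (∃ A : ℂ, Tendsto (fun t => dotc m (u t) (v1 t) - dotc m (u1 t) (v t)) atTop (𝓝 A)) ∧
    (∃ B : ℂ, Tendsto (fun t => dotc m (u t) (v1 t) - dotc m (u1 t) (v t)) atBot (𝓝 B)) := by
  obtain ⟨hfl, huc, hu1c, hue, hu1e⟩ := hu
  obtain ⟨hgl, hvc, hv1c, hve, hv1e⟩ := hv
  have hQ' := locL2_ct hQ
  have hs' := locL1_ct hs
  set h : ℝ → ℂ := fun t => dotc m (f t) (v t) - dotc m (u t) (g t) with hdef
  have hInt : Integrable h volume := (intL2dotc hfL2 hvL2).sub (intL2dotc huL2 hgL2)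
  -- the key representation
  have key : ∀ x y : ℝ, x ≤ y →
      (dotc m (u y) (v1 y) - dotc m (u1 y) (v y))
        - (dotc m (u x) (v1 x) - dotc m (u1 x) (v x)) = ∫ t in x..y, h t := by
    intro x y hxy
    have Iφu : ∀ a b : ℝ, IntervalIntegrable
        (fun t => mv m (Q t) (u t) + u1 t) volume a b :=
      fun a b => (integrandII hQ hs huc hu1c hfl a b).1
    have Iφu1 : ∀ a b : ℝ, IntervalIntegrable
        (fun t => mv m (s t - Q t ^ 2) (u t) - mv m (Q t) (u1 t) - f t) volume a b :=
      fun a b => (integrandII hQ hs huc hu1c hfl a b).2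
    have Iφv : ∀ a b : ℝ, IntervalIntegrable
        (fun t => mv m ((Q t)ᴴ) (v t) + v1 t) volume a b :=
      fun a b => (integrandII hQ' hs' hvc hv1c hgl a b).1
    have Iφv1 : ∀ a b : ℝ, IntervalIntegrable
        (fun t => mv m ((s t)ᴴ - (Q t)ᴴ ^ 2) (v t) - mv m ((Q t)ᴴ) (v1 t) - g t)
          volume a b :=
      fun a b => (integrandII hQ' hs' hvc hv1c hgl a b).2
    have PR1 := vecPR Iφu Iφv1 hue hv1e x y hxy
    have PR2 := vecPR Iφu1 Iφv hu1e hve x y hxy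
    have J1 : IntervalIntegrable (fun t =>
        dotc m (mv m (Q t) (u t) + u1 t) (v1 t)
          + dotc m (u t) (mv m ((s t)ᴴ - (Q t)ᴴ ^ 2) (v t) - mv m ((Q t)ᴴ) (v1 t) - g t))
        volume x y :=
      (II.dotc_left (Iφu x y) hv1c).add (II.dotc_right huc (Iφv1 x y))
    have J2 : IntervalIntegrable (fun t =>
        dotc m (mv m (s t - Q t ^ 2) (u t) - mv m (Q t) (u1 t) - f t) (v t)
          + dotc m (u1 t) (mv m ((Q t)ᴴ) (v t) + v1 t)) volume x y :=
      (II.dotc_left (Iφu1 x y) hvc).add (II.dotc_right hu1c (Iφv x y))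
    calc (dotc m (u y) (v1 y) - dotc m (u1 y) (v y))
        - (dotc m (u x) (v1 x) - dotc m (u1 x) (v x))
        = (dotc m (u y) (v1 y) - dotc m (u x) (v1 x))
          - (dotc m (u1 y) (v y) - dotc m (u1 x) (v x)) := by ring
      _ = (∫ t in x..y, (dotc m (mv m (Q t) (u t) + u1 t) (v1 t)
            + dotc m (u t) (mv m ((s t)ᴴ - (Q t)ᴴ ^ 2) (v t) - mv m ((Q t)ᴴ) (v1 t) - g t)))
          - ∫ t in x..y, (dotc m (mv m (s t - Q t ^ 2) (u t) - mv m (Q t) (u1 t) - f t) (v t)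
            + dotc m (u1 t) (mv m ((Q t)ᴴ) (v t) + v1 t)) := by rw [PR1, PR2]
      _ = ∫ t in x..y, ((dotc m (mv m (Q t) (u t) + u1 t) (v1 t)
            + dotc m (u t) (mv m ((s t)ᴴ - (Q t)ᴴ ^ 2) (v t) - mv m ((Q t)ᴴ) (v1 t) - g t))
          - (dotc m (mv m (s t - Q t ^ 2) (u t) - mv m (Q t) (u1 t) - f t) (v t)
            + dotc m (u1 t) (mv m ((Q t)ᴴ) (v t) + v1 t))) :=
        (intervalIntegral.integral_sub J1 J2).symm
      _ = ∫ t in x..y, h t := by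
        congr 1
        funext t
        exact pointwise_bracket (Q t) (s t) (u t) (u1 t) (v t) (v1 t) (f t) (g t)
  have rep : ∀ x : ℝ, dotc m (u x) (v1 x) - dotc m (u1 x) (v x)
      = (dotc m (u 0) (v1 0) - dotc m (u1 0) (v 0)) + ∫ t in (0:ℝ)..x, h t := by
    intro x
    rcases le_total 0 x with hx | hx
    · linear_combination key 0 x hx
    · have h0 := key x 0 hx
      have hsym : (∫ t in x..(0:ℝ), h t) = -∫ t in (0:ℝ)..x, h t :=
        intervalIntegral.integral_symm 0 x
      linear_combination -h0 - hsym
  constructor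
  · refine ⟨(dotc m (u 0) (v1 0) - dotc m (u1 0) (v 0)) + ∫ t in Set.Ioi (0:ℝ), h t, ?_⟩
    have := (MeasureTheory.intervalIntegral_tendsto_integral_Ioi 0
      (hInt.integrableOn) tendsto_id).const_add (dotc m (u 0) (v1 0) - dotc m (u1 0) (v 0))
    exact Tendsto.congr (fun x => (rep x).symm) this
  · refine ⟨(dotc m (u 0) (v1 0) - dotc m (u1 0) (v 0)) + -∫ t in Set.Iic (0:ℝ), h t, ?_⟩
    have h2 := ((MeasureTheory.intervalIntegral_tendsto_integral_Iic 0
      (hInt.integrableOn) tendsto_id).neg).const_add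
      (dotc m (u 0) (v1 0) - dotc m (u1 0) (v 0))
    refine Tendsto.congr (fun x => ?_) h2
    rw [rep x]
    have hsym : (∫ t in x..(0:ℝ), h t) = -∫ t in (0:ℝ)..x, h t :=
      intervalIntegral.integral_symm 0 x
    simp only [id_eq]
    linear_combination -hsym
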